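/- Let α and β be permutations in S_n. If there exists a permutation μ ∈ S_n with α^μ = α⁻¹ and β^μ = β⁻¹, then there exists a permutation γ ∈ S_n with α^γ = α⁻¹, β^γ = β⁻¹, and the support of γ contained in M(α) ∪ M(β). -/

import Mathlib

open Equiv Equiv.Perm

theorem perm_inv_apply_self' {α : Type*} (f : Equiv.Perm α) (x : α) : f⁻¹ (f x) = x :=
  f.symm_apply_apply x

/-- Lemma 2.3: if some μ simultaneously conjugates α and β to their inverses,
then some γ does so with support inside M(α) ∪ M(β). -/
theorem stmt_4 {n : ℕ} (α β : Equiv.Perm (Fin n))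
    (h : ∃ μ : Equiv.Perm (Fin n), μ⁻¹ * α * μ = α⁻¹ ∧ μ⁻¹ * β * μ = β⁻¹) :
    ∃ γ : Equiv.Perm (Fin n), γ⁻¹ * α * γ = α⁻¹ ∧ γ⁻¹ * β * γ = β⁻¹ ∧
      γ.support ⊆ α.support ∪ β.support := by
  obtain ⟨μ, h1, h2⟩ := h
  have ha : ∀ x, μ (α⁻¹ x) = α (μ x) := by
    intro x
    have e : μ * α⁻¹ = α * μ := by rw [← h1]; group
    have := congrArg (fun f : Equiv.Perm (Fin n) => f x) e
    simpa [Equiv.Perm.mul_apply] using this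
  have hb : ∀ x, μ (β⁻¹ x) = β (μ x) := by
    intro x
    have e : μ * β⁻¹ = β * μ := by rw [← h2]; group
    have := congrArg (fun f : Equiv.Perm (Fin n) => f x) e
    simpa [Equiv.Perm.mul_apply] using this
  set p : Fin n → Prop := fun x => x ∈ α.support ∪ β.support with hp_def
  have hmemα : ∀ x, x ∈ α.support ↔ μ x ∈ α.support := by
    intro x
    rw [Equiv.Perm.mem_support, Equiv.Perm.mem_support, ← ha,
      (μ.injective.ne_iff : μ (α⁻¹ x) ≠ μ x ↔ α⁻¹ x ≠ x)]
    constructor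
    · intro hx hc
      exact hx ((Equiv.Perm.inv_eq_iff_eq).mpr hc.symm)
    · intro hx hc
      exact hx ((Equiv.Perm.inv_eq_iff_eq).mp hc).symm
  have hmemβ : ∀ x, x ∈ β.support ↔ μ x ∈ β.support := by
    intro x
    rw [Equiv.Perm.mem_support, Equiv.Perm.mem_support, ← hb,
      (μ.injective.ne_iff : μ (β⁻¹ x) ≠ μ x ↔ β⁻¹ x ≠ x)]
    constructor
    · intro hx hc
      exact hx ((Equiv.Perm.inv_eq_iff_eq).mpr hc.symm)
    · intro hx hc
      exact hx ((Equiv.Perm.inv_eq_iff_eq).mp hc).symm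
  have hp : ∀ x, p x ↔ p (μ x) := by
    intro x
    simp only [hp_def, Finset.mem_union]
    rw [hmemα, hmemβ]
  set γ : Equiv.Perm (Fin n) := Equiv.Perm.ofSubtype (μ.subtypePerm (fun x => (hp x).symm)) with hγ_def
  have hγ_mem : ∀ x, p x → γ x = μ x := by
    intro x hx
    rw [hγ_def, Equiv.Perm.ofSubtype_apply_of_mem _ hx]
    rfl
  have hγ_not : ∀ x, ¬ p x → γ x = x := by
    intro x hx
    rw [hγ_def, Equiv.Perm.ofSubtype_apply_of_not_mem _ hx]
  -- helper: p is preserved by α⁻¹ and β⁻¹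
  have hpinvα : ∀ x, p x → p (α⁻¹ x) := by
    intro x hx
    by_cases hxa : x ∈ α.support
    · refine Finset.mem_union_left _ ?_
      rw [← Equiv.Perm.support_inv α, Equiv.Perm.apply_mem_support,
        Equiv.Perm.support_inv]
      exact hxa
    · have : α⁻¹ x = x := by
        rw [Equiv.Perm.notMem_support] at hxa
        rw [← hxa, perm_inv_apply_self', hxa]
      rw [this]; exact hx
  have hpinvβ : ∀ x, p x → p (β⁻¹ x) := by
    intro x hx
    by_cases hxb : x ∈ β.support
    · refine Finset.mem_union_right _ ?_
      rw [← Equiv.Perm.support_inv β, Equiv.Perm.apply_mem_support,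
        Equiv.Perm.support_inv]
      exact hxb
    · have : β⁻¹ x = x := by
        rw [Equiv.Perm.notMem_support] at hxb
        rw [← hxb, perm_inv_apply_self', hxb]
      rw [this]; exact hx
  have keyα : ∀ x, γ (α⁻¹ x) = α (γ x) := by
    intro x
    by_cases hx : p x
    · rw [hγ_mem _ hx, hγ_mem _ (hpinvα x hx), ha]
    · have hxa : x ∉ α.support := fun hc => hx (Finset.mem_union_left _ hc)
      rw [Equiv.Perm.notMem_support] at hxa
      have hinv : α⁻¹ x = x := by rw [← hxa, perm_inv_apply_self', hxa]
      rw [hinv, hγ_not _ hx, hxa]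
  have keyβ : ∀ x, γ (β⁻¹ x) = β (γ x) := by
    intro x
    by_cases hx : p x
    · rw [hγ_mem _ hx, hγ_mem _ (hpinvβ x hx), hb]
    · have hxb : x ∉ β.support := fun hc => hx (Finset.mem_union_right _ hc)
      rw [Equiv.Perm.notMem_support] at hxb
      have hinv : β⁻¹ x = x := by rw [← hxb, perm_inv_apply_self', hxb]
      rw [hinv, hγ_not _ hx, hxb]
  refine ⟨γ, ?_, ?_, ?_⟩
  · ext x
    simp only [Equiv.Perm.mul_apply, Equiv.Perm.coe_mul, Function.comp_apply]
    rw [← keyα, perm_inv_apply_self']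
  · ext x
    simp only [Equiv.Perm.mul_apply, Equiv.Perm.coe_mul, Function.comp_apply]
    rw [← keyβ, perm_inv_apply_self']
  · intro x hx
    rw [Equiv.Perm.mem_support] at hx
    by_contra hpx
    exact hx (hγ_not x (by simpa [hp_def] using hpx))
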